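/- arXiv:1602.02391 — 8 statements merged into one kernel-verified Lean document; each statement's English description precedes it below -/
import Mathlib

section
/- Let Γ be a monotone dispersion of g and let ω* be a maximizer of g over Ω. Then g(ω*) ≥ Γ(ω*). -/
open MeasureTheory

theorem monotone_dispersion_max_le
    {Ω : Type*} [MeasurableSpace Ω] (M : Measure Ω) (g Γ : Ω → ℝ)
    (hg_pos : ∀ ω, 0 < g ω) (hΓ_pos : ∀ ω, 0 < Γ ω)
    (hg_int : Integrable g M) (hΓ_int : Integrable Γ M)
    (hg_pdf : ∫ ω, g ω ∂M = 1) (hΓ_pdf : ∫ ω, Γ ω ∂M = 1)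
    (h1 : ∀ ω₁ ω₂, g ω₁ = g ω₂ ↔ Γ ω₁ = Γ ω₂)
    (h2 : ∀ ω₁ ω₂, g ω₁ > g ω₂ ↔ Γ ω₁ > Γ ω₂)
    (h3 : ∀ ω₁ ω₂, g ω₁ > g ω₂ → g ω₁ / g ω₂ > Γ ω₁ / Γ ω₂)
    (ωs : Ω) (hmax : ∀ ω, g ω ≤ g ωs) :
    g ωs ≥ Γ ωs := by
  by_contra h
  push_neg at h
  -- pointwise: g ω < Γ ω for all ω
  have hpt : ∀ ω, g ω < Γ ω := by
    intro ω
    rcases lt_or_eq_of_le (hmax ω) with hlt | heq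
    · have hdiv := h3 ωs ω hlt
      have hgω := hg_pos ω
      have hΓω := hΓ_pos ω
      have hgs := hg_pos ωs
      have hΓs := hΓ_pos ωs
      rw [gt_iff_lt, div_lt_div_iff₀ hΓω hgω] at hdiv
      nlinarith
    · have hΓeq : Γ ω = Γ ωs := (h1 ω ωs).mp heq
      rw [heq, hΓeq]; exact h
  -- integral of Γ - g is 0, nonneg pointwise ⇒ a.e. zero
  have hint : Integrable (fun ω => Γ ω - g ω) M := hΓ_int.sub hg_int
  have hzero : ∫ ω, (Γ ω - g ω) ∂M = 0 := by
    rw [integral_sub hΓ_int hg_int, hΓ_pdf, hg_pdf]; ring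
  have hnonneg : 0 ≤ fun ω => Γ ω - g ω :=
    fun ω => le_of_lt (sub_pos.mpr (hpt ω))
  have hae : (fun ω => Γ ω - g ω) =ᵐ[M] 0 :=
    (integral_eq_zero_iff_of_nonneg hnonneg hint).mp hzero
  -- but the function is everywhere positive, so M = 0
  have hM : M Set.univ = 0 := by
    have h0 := hae
    rw [Filter.EventuallyEq, Filter.eventually_iff, mem_ae_iff] at h0
    have hset : {ω | (fun ω => Γ ω - g ω) ω = (0 : Ω → ℝ) ω}ᶜ = Set.univ := by
      ext ω; simp [ne_of_gt (sub_pos.mpr (hpt ω))]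
    rwa [hset] at h0
  have hM0 : M = 0 := Measure.measure_univ_eq_zero.mp hM
  rw [hM0] at hg_pdf
  simp at hg_pdf
end

section
/- Let Γ be a monotone dispersion of g, let ω* be a maximizer of g over Ω, and suppose the set {ω : g(ω) < g(ω*)} has positive measure. Then g(ω*) > Γ(ω*). -/
open MeasureTheory

theorem monotone_dispersion_max_lt
    {Ω : Type*} [MeasurableSpace Ω] (M : Measure Ω) (g Γ : Ω → ℝ)
    (hg_pos : ∀ ω, 0 < g ω) (hΓ_pos : ∀ ω, 0 < Γ ω)
    (hg_int : Integrable g M) (hΓ_int : Integrable Γ M)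
    (hg_pdf : ∫ ω, g ω ∂M = 1) (hΓ_pdf : ∫ ω, Γ ω ∂M = 1)
    (h1 : ∀ ω₁ ω₂, g ω₁ = g ω₂ ↔ Γ ω₁ = Γ ω₂)
    (h2 : ∀ ω₁ ω₂, g ω₁ > g ω₂ ↔ Γ ω₁ > Γ ω₂)
    (h3 : ∀ ω₁ ω₂, g ω₁ > g ω₂ → g ω₁ / g ω₂ > Γ ω₁ / Γ ω₂)
    (ωs : Ω) (hmax : ∀ ω, g ω ≤ g ωs)
    (hpos : 0 < M {ω | g ω < g ωs}) :
    g ωs > Γ ωs := by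
  by_contra hcon
  push_neg at hcon
  -- hcon : g ωs ≤ Γ ωs
  -- Show Γ ω > g ω whenever g ω < g ωs
  have key : ∀ ω, g ω < g ωs → g ω < Γ ω := by
    intro ω hω
    have h := h3 ωs ω hω
    have hgω := hg_pos ω
    have hΓω := hΓ_pos ω
    have hgs := hg_pos ωs
    rw [gt_iff_lt, div_lt_div_iff₀ hΓω hgω] at h
    -- h : Γ ωs * g ω < g ωs * Γ ω
    nlinarith [hΓ_pos ωs]
  -- Γ ≥ g everywhere
  have hle : ∀ ω, g ω ≤ Γ ω := by
    intro ω
    rcases lt_or_eq_of_le (hmax ω) with h | h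
    · exact (key ω h).le
    · have : Γ ω = Γ ωs := (h1 ω ωs).mp h
      rw [h, this]
      exact hcon
  -- integral of Γ - g is 0, nonneg, so Γ - g = 0 a.e.
  have hint : Integrable (fun ω => Γ ω - g ω) M := hΓ_int.sub hg_int
  have hzero : ∫ ω, (Γ ω - g ω) ∂M = 0 := by
    rw [integral_sub hΓ_int hg_int, hg_pdf, hΓ_pdf]; ring
  have hnn : 0 ≤ᵐ[M] fun ω => Γ ω - g ω :=
    Filter.Eventually.of_forall fun ω => sub_nonneg.mpr (hle ω)
  have hae : (fun ω => Γ ω - g ω) =ᵐ[M] 0 :=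
    (integral_eq_zero_iff_of_nonneg_ae hnn hint).mp hzero
  -- but Γ - g > 0 on a set of positive measure
  have hsub : {ω | g ω < g ωs} ⊆ {ω | ¬ (fun ω => Γ ω - g ω) ω = (0 : Ω → ℝ) ω} := by
    intro ω hω
    simp only [Set.mem_setOf_eq, Pi.zero_apply]
    have := key ω hω
    intro h0
    linarith
  have : M {ω | g ω < g ωs} = 0 :=
    measure_mono_null hsub hae
  exact absurd this hpos.ne'
end

section
/- Let g : Ω → ℝ₊₊ be a non-uniform probability density function and let γ > 1 be such that g^γ is integrable with positive finite integral. Then g is a monotone dispersion of the normalized function Γ(ω) = g(ω)^γ / ∫ g^γ dM (equivalently, Γ is a monotone concentration of g): for all ω₁, ω₂, g(ω₁) > g(ω₂) implies Γ(ω₁)/Γ(ω₂) > g(ω₁)/g(ω₂), and the order-preservation conditions hold. -/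
open MeasureTheory

theorem power_gt_one_monotone_concentration
    {Ω : Type*} [MeasurableSpace Ω] (M : Measure Ω) (g : Ω → ℝ) (γ : ℝ)
    (hg_pos : ∀ ω, 0 < g ω)
    (hg_pdf : ∫ ω, g ω ∂M = 1)
    (hg_nonunif : ∃ ω₁ ω₂, g ω₁ ≠ g ω₂)
    (hγ : 1 < γ)
    (hint_pos : 0 < ∫ ω, g ω ^ γ ∂M)
    (hint : Integrable (fun ω => g ω ^ γ) M) :
    (∀ ω₁ ω₂, g ω₁ = g ω₂ ↔
        g ω₁ ^ γ / ∫ ω, g ω ^ γ ∂M = g ω₂ ^ γ / ∫ ω, g ω ^ γ ∂M) ∧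
    (∀ ω₁ ω₂, g ω₁ > g ω₂ ↔
        g ω₁ ^ γ / ∫ ω, g ω ^ γ ∂M > g ω₂ ^ γ / ∫ ω, g ω ^ γ ∂M) ∧
    (∀ ω₁ ω₂, g ω₁ > g ω₂ →
        (g ω₁ ^ γ / ∫ ω, g ω ^ γ ∂M) / (g ω₂ ^ γ / ∫ ω, g ω ^ γ ∂M) >
          g ω₁ / g ω₂) := by
  set I := ∫ ω, g ω ^ γ ∂M with hI
  have hγ0 : 0 < γ := lt_trans one_pos hγ
  have hlt : ∀ ω₁ ω₂, g ω₁ > g ω₂ ↔ g ω₁ ^ γ / I > g ω₂ ^ γ / I := by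
    intro ω₁ ω₂
    rw [gt_iff_lt, gt_iff_lt, div_lt_div_iff_of_pos_right hint_pos,
      Real.rpow_lt_rpow_iff (hg_pos ω₂).le (hg_pos ω₁).le hγ0]
  refine ⟨fun ω₁ ω₂ => ?_, hlt, fun ω₁ ω₂ h => ?_⟩
  · constructor
    · intro h; rw [h]
    · intro h
      by_contra hne
      rcases lt_or_gt_of_ne hne with h' | h'
      · exact absurd h.symm (ne_of_gt ((hlt ω₂ ω₁).mp h'))
      · exact absurd h (ne_of_gt ((hlt ω₁ ω₂).mp h'))
  · have h1 := hg_pos ω₁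
    have h2 := hg_pos ω₂
    have hr : (g ω₁ ^ γ / I) / (g ω₂ ^ γ / I) = (g ω₁ / g ω₂) ^ γ := by
      rw [div_div_div_comm, div_self hint_pos.ne', div_one, Real.div_rpow h1.le h2.le]
    rw [hr]
    have hq : 1 < g ω₁ / g ω₂ := (one_lt_div h2).mpr h
    calc g ω₁ / g ω₂ = (g ω₁ / g ω₂) ^ (1 : ℝ) := (Real.rpow_one _).symm
      _ < (g ω₁ / g ω₂) ^ γ := Real.rpow_lt_rpow_left_iff hq |>.mpr hγ
end

section
/- Let Γ be a monotone dispersion of g. Define b := sup Γ({ω : g(ω) ≤ Γ(ω)}) and B := inf Γ({ω : g(ω) ≥ Γ(ω)}). Then b ≤ B. -/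
open MeasureTheory

theorem dispersion_b_le_B
    {Ω : Type*} [MeasurableSpace Ω] (M : Measure Ω) (g Γ : Ω → ℝ)
    (hg_pos : ∀ ω, 0 < g ω) (hΓ_pos : ∀ ω, 0 < Γ ω)
    (hg_pdf : ∫ ω, g ω ∂M = 1) (hΓ_pdf : ∫ ω, Γ ω ∂M = 1)
    (hg_nonunif : ∃ ω₁ ω₂, g ω₁ ≠ g ω₂) (hΓ_nonunif : ∃ ω₁ ω₂, Γ ω₁ ≠ Γ ω₂)
    (h1 : ∀ ω₁ ω₂, g ω₁ = g ω₂ ↔ Γ ω₁ = Γ ω₂)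
    (h2 : ∀ ω₁ ω₂, g ω₁ > g ω₂ ↔ Γ ω₁ > Γ ω₂)
    (h3 : ∀ ω₁ ω₂, g ω₁ > g ω₂ → g ω₁ / g ω₂ > Γ ω₁ / Γ ω₂)
    (hne₁ : {ω | g ω ≤ Γ ω}.Nonempty) (hne₂ : {ω | g ω ≥ Γ ω}.Nonempty)
    (hbdd : BddAbove (Γ '' {ω | g ω ≤ Γ ω})) :
    sSup (Γ '' {ω | g ω ≤ Γ ω}) ≤ sInf (Γ '' {ω | g ω ≥ Γ ω}) := by
  have key : ∀ ω₁ ∈ {ω | g ω ≤ Γ ω}, ∀ ω₂ ∈ {ω | g ω ≥ Γ ω}, Γ ω₁ ≤ Γ ω₂ := by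
    intro ω₁ h₁ ω₂ h₂
    by_contra hlt
    push_neg at hlt
    have hgg : g ω₁ > g ω₂ := (h2 ω₁ ω₂).mpr hlt
    have h3' := h3 ω₁ ω₂ hgg
    have hle : g ω₁ / g ω₂ ≤ Γ ω₁ / Γ ω₂ :=
      div_le_div₀ (le_of_lt (lt_of_lt_of_le (hg_pos ω₁) h₁)) h₁ (hΓ_pos ω₂) h₂
    linarith
  apply csSup_le (hne₁.image Γ)
  rintro b ⟨ω₁, h₁, rfl⟩
  apply le_csInf (hne₂.image Γ)
  rintro B ⟨ω₂, h₂, rfl⟩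
  exact key ω₁ h₁ ω₂ h₂
end

section
/- Let Γ be a monotone dispersion of g, and let b := sup Γ({ω : g(ω) ≤ Γ(ω)}) and B := inf Γ({ω : g(ω) ≥ Γ(ω)}). Then for any r ∈ [b, B]: if Γ(ω) > r then g(ω) > Γ(ω), and if Γ(ω) < r then g(ω) < Γ(ω). -/
open MeasureTheory

theorem dispersion_threshold
    {Ω : Type*} [MeasurableSpace Ω] (M : Measure Ω) (g Γ : Ω → ℝ)
    (hg_pos : ∀ ω, 0 < g ω) (hΓ_pos : ∀ ω, 0 < Γ ω)
    (hg_pdf : ∫ ω, g ω ∂M = 1) (hΓ_pdf : ∫ ω, Γ ω ∂M = 1)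
    (hg_nonunif : ∃ ω₁ ω₂, g ω₁ ≠ g ω₂) (hΓ_nonunif : ∃ ω₁ ω₂, Γ ω₁ ≠ Γ ω₂)
    (h1 : ∀ ω₁ ω₂, g ω₁ = g ω₂ ↔ Γ ω₁ = Γ ω₂)
    (h2 : ∀ ω₁ ω₂, g ω₁ > g ω₂ ↔ Γ ω₁ > Γ ω₂)
    (h3 : ∀ ω₁ ω₂, g ω₁ > g ω₂ → g ω₁ / g ω₂ > Γ ω₁ / Γ ω₂)
    (hne₁ : {ω | g ω ≤ Γ ω}.Nonempty) (hne₂ : {ω | g ω ≥ Γ ω}.Nonempty)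
    (hbdd : BddAbove (Γ '' {ω | g ω ≤ Γ ω}))
    (r : ℝ)
    (hr : r ∈ Set.Icc (sSup (Γ '' {ω | g ω ≤ Γ ω})) (sInf (Γ '' {ω | g ω ≥ Γ ω}))) :
    (∀ ω, Γ ω > r → g ω > Γ ω) ∧ (∀ ω, Γ ω < r → g ω < Γ ω) := by
  obtain ⟨hrb, hrB⟩ := hr
  constructor
  · intro ω hΓr
    by_contra h
    push_neg at h
    have hmem : Γ ω ∈ Γ '' {ω | g ω ≤ Γ ω} := ⟨ω, h, rfl⟩
    have := le_csSup hbdd hmem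
    linarith
  · intro ω hΓr
    by_contra h
    push_neg at h
    have hmem : Γ ω ∈ Γ '' {ω | g ω ≥ Γ ω} := ⟨ω, h, rfl⟩
    have hbb : BddBelow (Γ '' {ω | g ω ≥ Γ ω}) :=
      ⟨0, fun x ⟨w, _, hw⟩ => hw ▸ (hΓ_pos w).le⟩
    have := csInf_le hbb hmem
    linarith
end

section
/- If Γ is a monotone dispersion of g, then the information entropy of Γ is at least that of g: H(Γ) ≥ H(g), where H(f) = −∫ f log f dM. -/
open MeasureTheory

lemma gibbs_pointwise {a b : ℝ} (ha : 0 < a) (hb : 0 < b) :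
    a - b ≤ a * Real.log a - a * Real.log b := by
  have h := Real.log_le_sub_one_of_pos (show 0 < b / a by positivity)
  rw [Real.log_div hb.ne' ha.ne'] at h
  have h2 := mul_le_mul_of_nonneg_left h ha.le
  rw [mul_sub, mul_sub, mul_div_cancel₀ _ ha.ne'] at h2
  nlinarith

theorem dispersion_entropy_ge
    {Ω : Type*} [MeasurableSpace Ω] (M : Measure Ω) (g Γ : Ω → ℝ)
    (hg_pos : ∀ ω, 0 < g ω) (hΓ_pos : ∀ ω, 0 < Γ ω)
    (hg_pdf : ∫ ω, g ω ∂M = 1) (hΓ_pdf : ∫ ω, Γ ω ∂M = 1)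
    (hg_nonunif : ∃ ω₁ ω₂, g ω₁ ≠ g ω₂) (hΓ_nonunif : ∃ ω₁ ω₂, Γ ω₁ ≠ Γ ω₂)
    (hint₁ : Integrable (fun ω => g ω * Real.log (g ω)) M)
    (hint₂ : Integrable (fun ω => g ω * Real.log (Γ ω)) M)
    (hint₃ : Integrable (fun ω => Γ ω * Real.log (Γ ω)) M)
    (h1 : ∀ ω₁ ω₂, g ω₁ = g ω₂ ↔ Γ ω₁ = Γ ω₂)
    (h2 : ∀ ω₁ ω₂, g ω₁ > g ω₂ ↔ Γ ω₁ > Γ ω₂)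
    (h3 : ∀ ω₁ ω₂, g ω₁ > g ω₂ → g ω₁ / g ω₂ > Γ ω₁ / Γ ω₂) :
    (-∫ ω, Γ ω * Real.log (Γ ω) ∂M) ≥ -∫ ω, g ω * Real.log (g ω) ∂M := by
  have hg_int : Integrable g M := by
    by_contra h
    rw [integral_undef h] at hg_pdf; norm_num at hg_pdf
  have hG_int : Integrable Γ M := by
    by_contra h
    rw [integral_undef h] at hΓ_pdf; norm_num at hΓ_pdf
  -- Gibbs inequality: ∫ g log Γ ≤ ∫ g log g
  have gibbs : ∫ ω, g ω * Real.log (Γ ω) ∂M ≤ ∫ ω, g ω * Real.log (g ω) ∂M := by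
    have h0 : ∫ ω, (g ω - Γ ω) ∂M = 0 := by
      rw [integral_sub hg_int hG_int, hg_pdf, hΓ_pdf]; ring
    have hmono : ∫ ω, (g ω - Γ ω) ∂M
        ≤ ∫ ω, (g ω * Real.log (g ω) - g ω * Real.log (Γ ω)) ∂M :=
      integral_mono (hg_int.sub hG_int) (hint₁.sub hint₂)
        (fun ω => gibbs_pointwise (hg_pos ω) (hΓ_pos ω))
    rw [h0, integral_sub hint₁ hint₂] at hmono
    linarith
  -- key monotonicity: where g < Γ, Γ is smaller than where Γ < g
  have key : ∀ ω₁ ω₂, g ω₁ < Γ ω₁ → Γ ω₂ < g ω₂ → Γ ω₁ < Γ ω₂ := by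
    intro ω₁ ω₂ hq₁ hq₂
    by_contra hle
    push_neg at hle
    rcases lt_or_eq_of_le hle with hlt | heq
    · have hg : g ω₂ < g ω₁ := (h2 ω₁ ω₂).mpr hlt
      have h3' := h3 ω₁ ω₂ hg
      have hc := (div_lt_div_iff₀ (hΓ_pos ω₂) (hg_pos ω₂)).mp h3'
      nlinarith [hΓ_pos ω₂, hg_pos ω₂]
    · have hgeq : g ω₂ = g ω₁ := (h1 ω₂ ω₁).mpr heq
      linarith
  -- second step: ∫ Γ log Γ ≤ ∫ g log Γ
  have step2 : ∫ ω, Γ ω * Real.log (Γ ω) ∂M ≤ ∫ ω, g ω * Real.log (Γ ω) ∂M := by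
    by_cases hA : ∃ ω, g ω < Γ ω
    · by_cases hB : ∃ ω, Γ ω < g ω
      · obtain ⟨ωa, hωa⟩ := hA
        obtain ⟨ωb, hωb⟩ := hB
        set A : Set ℝ := {x | ∃ ω, g ω < Γ ω ∧ Real.log (Γ ω) = x} with hAdef
        have hAne : A.Nonempty := ⟨_, ωa, hωa, rfl⟩
        have hAbd : ∀ ω', Γ ω' < g ω' → ∀ x ∈ A, x ≤ Real.log (Γ ω') := by
          rintro ω' hω' x ⟨ω, hω, rfl⟩
          exact Real.log_le_log (hΓ_pos ω) (key ω ω' hω hω').le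
        set c := sSup A with hcdef
        have hc_up : ∀ ω, g ω < Γ ω → Real.log (Γ ω) ≤ c := fun ω h =>
          le_csSup ⟨Real.log (Γ ωb), fun x hx => hAbd ωb hωb x hx⟩ ⟨ω, h, rfl⟩
        have hc_lo : ∀ ω, Γ ω < g ω → c ≤ Real.log (Γ ω) := fun ω h =>
          csSup_le hAne (hAbd ω h)
        have hpt : ∀ ω, 0 ≤ (g ω - Γ ω) * (Real.log (Γ ω) - c) := by
          intro ω
          rcases lt_trichotomy (g ω) (Γ ω) with h | h | h
          · have := hc_up ω h; nlinarith
          · simp [h]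
          · have := hc_lo ω h; nlinarith
        have hfun : (fun ω => (g ω - Γ ω) * (Real.log (Γ ω) - c))
            = fun ω => g ω * Real.log (Γ ω) - Γ ω * Real.log (Γ ω) - c * g ω + c * Γ ω := by
          funext ω; ring
        have h0 : 0 ≤ ∫ ω, (g ω - Γ ω) * (Real.log (Γ ω) - c) ∂M :=
          integral_nonneg hpt
        have heval : ∫ ω, (g ω - Γ ω) * (Real.log (Γ ω) - c) ∂M
            = ∫ ω, g ω * Real.log (Γ ω) ∂M - ∫ ω, Γ ω * Real.log (Γ ω) ∂M := by
          have i1 : Integrable (fun ω => g ω * Real.log (Γ ω) - Γ ω * Real.log (Γ ω)) M :=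
            hint₂.sub hint₃
          have i2 : Integrable
              (fun ω => g ω * Real.log (Γ ω) - Γ ω * Real.log (Γ ω) - c * g ω) M :=
            i1.sub (hg_int.const_mul c)
          have i3 : Integrable (fun ω => c * g ω) M := hg_int.const_mul c
          have i4 : Integrable (fun ω => c * Γ ω) M := hG_int.const_mul c
          rw [hfun, integral_add i2 i4, integral_sub i1 i3, integral_sub hint₂ hint₃,
              integral_const_mul, integral_const_mul, hg_pdf, hΓ_pdf]
          ring
        linarith [heval ▸ h0]
      · push_neg at hB
        have h0 : ∫ ω, (Γ ω - g ω) ∂M = 0 := by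
          rw [integral_sub hG_int hg_int, hg_pdf, hΓ_pdf]; ring
        have hae : (fun ω => Γ ω - g ω) =ᵐ[M] 0 :=
          (integral_eq_zero_iff_of_nonneg (fun ω => sub_nonneg.mpr (hB ω))
            (hG_int.sub hg_int)).mp h0
        have hcongr : (fun ω => Γ ω * Real.log (Γ ω)) =ᵐ[M]
            fun ω => g ω * Real.log (Γ ω) := by
          filter_upwards [hae] with ω hω
          have : Γ ω = g ω := by
            have : Γ ω - g ω = 0 := hω
            linarith
          rw [this]
        rw [integral_congr_ae hcongr]
    · push_neg at hA
      have h0 : ∫ ω, (g ω - Γ ω) ∂M = 0 := by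
        rw [integral_sub hg_int hG_int, hg_pdf, hΓ_pdf]; ring
      have hae : (fun ω => g ω - Γ ω) =ᵐ[M] 0 :=
        (integral_eq_zero_iff_of_nonneg (fun ω => sub_nonneg.mpr (hA ω))
          (hg_int.sub hG_int)).mp h0
      have hcongr : (fun ω => Γ ω * Real.log (Γ ω)) =ᵐ[M]
          fun ω => g ω * Real.log (Γ ω) := by
        filter_upwards [hae] with ω hω
        have : g ω = Γ ω := by
          have : g ω - Γ ω = 0 := hω
          linarith
        rw [this]
      rw [integral_congr_ae hcongr]
  linarith
end

section
/- Let Γ be a monotone dispersion of g, with b := sup Γ({ω : g(ω) ≤ Γ(ω)}) and B := inf Γ({ω : g(ω) ≥ Γ(ω)}). If there exists r ∈ [b, B] such that M({ω : Γ(ω) ≠ r}) > 0, then H(Γ) > H(g). -/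
open MeasureTheory

theorem dispersion_entropy_gt
    {Ω : Type*} [MeasurableSpace Ω] (M : Measure Ω) (g Γ : Ω → ℝ)
    (hg_pos : ∀ ω, 0 < g ω) (hΓ_pos : ∀ ω, 0 < Γ ω)
    (hg_pdf : ∫ ω, g ω ∂M = 1) (hΓ_pdf : ∫ ω, Γ ω ∂M = 1)
    (hg_nonunif : ∃ ω₁ ω₂, g ω₁ ≠ g ω₂) (hΓ_nonunif : ∃ ω₁ ω₂, Γ ω₁ ≠ Γ ω₂)
    (hint₁ : Integrable (fun ω => g ω * Real.log (g ω)) M)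
    (hint₂ : Integrable (fun ω => g ω * Real.log (Γ ω)) M)
    (hint₃ : Integrable (fun ω => Γ ω * Real.log (Γ ω)) M)
    (h1 : ∀ ω₁ ω₂, g ω₁ = g ω₂ ↔ Γ ω₁ = Γ ω₂)
    (h2 : ∀ ω₁ ω₂, g ω₁ > g ω₂ ↔ Γ ω₁ > Γ ω₂)
    (h3 : ∀ ω₁ ω₂, g ω₁ > g ω₂ → g ω₁ / g ω₂ > Γ ω₁ / Γ ω₂)
    (r : ℝ)
    (hr : r ∈ Set.Icc (sSup (Γ '' {ω | g ω ≤ Γ ω})) (sInf (Γ '' {ω | g ω ≥ Γ ω})))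
    (hpos : 0 < M {ω | Γ ω ≠ r}) :
    (-∫ ω, Γ ω * Real.log (Γ ω) ∂M) > -∫ ω, g ω * Real.log (g ω) ∂M := by
  -- g and Γ are integrable since their integrals are 1 ≠ 0
  have hintg : Integrable g M := by
    by_contra h
    rw [integral_undef h] at hg_pdf
    norm_num at hg_pdf
  have hintΓ : Integrable Γ M := by
    by_contra h
    rw [integral_undef h] at hΓ_pdf
    norm_num at hΓ_pdf
  -- The set {g ≤ Γ} is nonempty
  have hne₁ : ∃ ω, g ω ≤ Γ ω := by
    by_contra h
    push_neg at h
    have hz : ∫ ω, (g ω - Γ ω) ∂M = 0 := by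
      rw [integral_sub hintg hintΓ, hg_pdf, hΓ_pdf]; ring
    have h0 : (fun ω => g ω - Γ ω) =ᵐ[M] 0 :=
      (integral_eq_zero_iff_of_nonneg (fun ω => by have := h ω; dsimp; linarith) (hintg.sub hintΓ)).mp hz
    have hnull : M {ω | ¬ ((fun ω => g ω - Γ ω) ω = (0 : Ω → ℝ) ω)} = 0 := h0
    have : M {ω | Γ ω ≠ r} = 0 := by
      refine measure_mono_null (fun ω _ => ?_) hnull
      have := h ω; simp only [Set.mem_setOf_eq, Pi.zero_apply]; intro hc; linarith
    exact hpos.ne' this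
  -- The set {Γ ≤ g} is nonempty
  have hne₂ : ∃ ω, Γ ω ≤ g ω := by
    by_contra h
    push_neg at h
    have hz : ∫ ω, (Γ ω - g ω) ∂M = 0 := by
      rw [integral_sub hintΓ hintg, hg_pdf, hΓ_pdf]; ring
    have h0 : (fun ω => Γ ω - g ω) =ᵐ[M] 0 :=
      (integral_eq_zero_iff_of_nonneg (fun ω => by have := h ω; dsimp; linarith) (hintΓ.sub hintg)).mp hz
    have hnull : M {ω | ¬ ((fun ω => Γ ω - g ω) ω = (0 : Ω → ℝ) ω)} = 0 := h0
    have : M {ω | Γ ω ≠ r} = 0 := by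
      refine measure_mono_null (fun ω _ => ?_) hnull
      have := h ω; simp only [Set.mem_setOf_eq, Pi.zero_apply]; intro hc; linarith
    exact hpos.ne' this
  obtain ⟨ω₁, hω₁⟩ := hne₁
  obtain ⟨ω₂, hω₂⟩ := hne₂
  -- key comparison: values of Γ on {g ≤ Γ} are below values on {Γ ≤ g}
  have key' : ∀ a b, g a ≤ Γ a → Γ b ≤ g b → Γ a ≤ Γ b := by
    intro a b ha hb
    by_contra h
    push_neg at h
    have hgab : g a > g b := (h2 a b).mpr h
    have h3' := h3 a b hgab
    have hle : g a / g b ≤ Γ a / Γ b :=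
      div_le_div₀ (le_of_lt (hΓ_pos a)) ha (hΓ_pos b) hb
    linarith
  -- bounds: Γ ≤ r on {g ≤ Γ}, Γ ≥ r on {Γ ≤ g}
  have hbdd : BddAbove (Γ '' {ω | g ω ≤ Γ ω}) := by
    refine ⟨Γ ω₂, ?_⟩
    rintro y ⟨a, ha, rfl⟩
    exact key' a ω₂ ha hω₂
  have hbdd' : BddBelow (Γ '' {ω | g ω ≥ Γ ω}) := by
    refine ⟨Γ ω₁, ?_⟩
    rintro y ⟨a, ha, rfl⟩
    exact key' ω₁ a hω₁ ha
  have hΓler : ∀ ω, g ω ≤ Γ ω → Γ ω ≤ r := fun ω h =>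
    le_trans (le_csSup hbdd ⟨ω, h, rfl⟩) hr.1
  have hΓger : ∀ ω, Γ ω ≤ g ω → r ≤ Γ ω := fun ω h =>
    le_trans hr.2 (csInf_le hbdd' ⟨ω, h, rfl⟩)
  have hrpos : 0 < r := lt_of_lt_of_le (hΓ_pos ω₁) (hΓler ω₁ hω₁)
  -- the pointwise nonnegative function φ
  set φ : Ω → ℝ := fun ω =>
      (g ω * Real.log (g ω) - g ω * Real.log (Γ ω) - g ω + Γ ω)
      + (g ω - Γ ω) * (Real.log (Γ ω) - Real.log r) with hφ
  have hA : ∀ ω, 0 ≤ g ω * Real.log (g ω) - g ω * Real.log (Γ ω) - g ω + Γ ω := by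
    intro ω
    have hx : 0 < Γ ω / g ω := div_pos (hΓ_pos ω) (hg_pos ω)
    have hlog := Real.log_le_sub_one_of_pos hx
    rw [Real.log_div (hΓ_pos ω).ne' (hg_pos ω).ne'] at hlog
    have hg := hg_pos ω
    have h' : g ω * (Real.log (Γ ω) - Real.log (g ω)) ≤ g ω * (Γ ω / g ω - 1) :=
      mul_le_mul_of_nonneg_left hlog hg.le
    have hdiv : g ω * (Γ ω / g ω - 1) = Γ ω - g ω := by
      field_simp
    nlinarith [h']
  have hA_strict : ∀ ω, g ω ≠ Γ ω →
      0 < g ω * Real.log (g ω) - g ω * Real.log (Γ ω) - g ω + Γ ω := by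
    intro ω hne
    have hx : 0 < Γ ω / g ω := div_pos (hΓ_pos ω) (hg_pos ω)
    have hx1 : Γ ω / g ω ≠ 1 := by
      intro hc
      rw [div_eq_one_iff_eq (hg_pos ω).ne'] at hc
      exact hne hc.symm
    have hlog := Real.log_lt_sub_one_of_pos hx hx1
    rw [Real.log_div (hΓ_pos ω).ne' (hg_pos ω).ne'] at hlog
    have hg := hg_pos ω
    have h' : g ω * (Real.log (Γ ω) - Real.log (g ω)) < g ω * (Γ ω / g ω - 1) :=
      mul_lt_mul_of_pos_left hlog hg
    have hdiv : g ω * (Γ ω / g ω - 1) = Γ ω - g ω := by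
      field_simp
    nlinarith [h']
  have hB : ∀ ω, 0 ≤ (g ω - Γ ω) * (Real.log (Γ ω) - Real.log r) := by
    intro ω
    rcases le_total (g ω) (Γ ω) with h | h
    · have h1' : Γ ω ≤ r := hΓler ω h
      have hlog : Real.log (Γ ω) ≤ Real.log r := Real.log_le_log (hΓ_pos ω) h1'
      nlinarith [mul_nonneg (sub_nonneg.mpr h) (sub_nonneg.mpr hlog)]
    · have h1' : r ≤ Γ ω := hΓger ω h
      have hlog : Real.log r ≤ Real.log (Γ ω) := Real.log_le_log hrpos h1'
      exact mul_nonneg (by linarith) (by linarith)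
  have hφ_nonneg : ∀ ω, 0 ≤ φ ω := fun ω => add_nonneg (hA ω) (hB ω)
  have hφ_pos : ∀ ω, Γ ω ≠ r → 0 < φ ω := by
    intro ω hne
    have hgne : g ω ≠ Γ ω := by
      intro hc
      have h1' : Γ ω ≤ r := hΓler ω hc.le
      have h2' : r ≤ Γ ω := hΓger ω hc.ge
      exact hne (le_antisymm h1' h2')
    exact add_pos_of_pos_of_nonneg (hA_strict ω hgne) (hB ω)
  -- φ rewritten as an integrable combination
  have hφ_eq : φ = fun ω =>
      (g ω * Real.log (g ω) - Γ ω * Real.log (Γ ω)) + (1 + Real.log r) * (Γ ω - g ω) := by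
    funext ω
    simp only [hφ]
    ring
  have hφ_int : Integrable φ M := by
    rw [hφ_eq]
    exact (hint₁.sub hint₃).add ((hintΓ.sub hintg).const_mul _)
  have hφ_integral : ∫ ω, φ ω ∂M
      = (∫ ω, g ω * Real.log (g ω) ∂M) - ∫ ω, Γ ω * Real.log (Γ ω) ∂M := by
    have i1 : Integrable (fun ω => g ω * Real.log (g ω) - Γ ω * Real.log (Γ ω)) M :=
      hint₁.sub hint₃
    have i2 : Integrable (fun ω => (1 + Real.log r) * (Γ ω - g ω)) M :=
      (hintΓ.sub hintg).const_mul _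
    rw [hφ_eq, integral_add i1 i2, integral_sub hint₁ hint₃, integral_const_mul,
      integral_sub hintΓ hintg, hg_pdf, hΓ_pdf]
    ring
  have hnonneg : 0 ≤ ∫ ω, φ ω ∂M := integral_nonneg hφ_nonneg
  have hstrict : 0 < ∫ ω, φ ω ∂M := by
    rcases hnonneg.lt_or_eq with h | h
    · exact h
    · exfalso
      have h0 : φ =ᵐ[M] 0 :=
        (integral_eq_zero_iff_of_nonneg hφ_nonneg hφ_int).mp h.symm
      have hnull : M {ω | ¬ (φ ω = (0 : Ω → ℝ) ω)} = 0 := h0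
      have : M {ω | Γ ω ≠ r} = 0 := by
        refine measure_mono_null (fun ω hω => ?_) hnull
        simp only [Set.mem_setOf_eq, Pi.zero_apply]
        exact (hφ_pos ω hω).ne'
      exact hpos.ne' this
  linarith [hφ_integral ▸ hstrict]
end

section
/- Let g be a non-uniform probability density function on Ω such that for some γ ∈ (0,1), Γ_γ(ω) := g(ω)^γ / ∫ g^γ dM is also a probability density function with well-defined entropy. Then H(Γ_γ) ≥ H(g): exponentiating with a weight less than one and normalizing does not decrease information entropy. -/
open MeasureTheory

lemma gibbs_aux {Ω : Type*} [MeasurableSpace Ω] (M : Measure Ω) (p q : Ω → ℝ)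
    (hp : ∀ ω, 0 < p ω) (hq : ∀ ω, 0 < q ω)
    (hpi : Integrable p M) (hqi : Integrable q M)
    (hp1 : ∫ ω, p ω ∂M = 1) (hq1 : ∫ ω, q ω ∂M = 1)
    (hpp : Integrable (fun ω => p ω * Real.log (p ω)) M)
    (hpq : Integrable (fun ω => p ω * Real.log (q ω)) M) :
    ∫ ω, p ω * Real.log (q ω) ∂M ≤ ∫ ω, p ω * Real.log (p ω) ∂M := by
  have key : ∀ ω, p ω * Real.log (q ω) - p ω * Real.log (p ω) ≤ q ω - p ω := by
    intro ω
    have h1 : Real.log (q ω / p ω) ≤ q ω / p ω - 1 :=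
      Real.log_le_sub_one_of_pos (div_pos (hq ω) (hp ω))
    have h2 : p ω * Real.log (q ω / p ω) ≤ p ω * (q ω / p ω - 1) :=
      mul_le_mul_of_nonneg_left h1 (hp ω).le
    rw [Real.log_div (hq ω).ne' (hp ω).ne'] at h2
    have h3 : p ω * (q ω / p ω - 1) = q ω - p ω := by
      field_simp [(hp ω).ne']
    nlinarith [h2, h3]
  have hmono : ∫ ω, (p ω * Real.log (q ω) - p ω * Real.log (p ω)) ∂M
      ≤ ∫ ω, (q ω - p ω) ∂M :=
    integral_mono (hpq.sub hpp) (hqi.sub hpi) key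
  rw [integral_sub hpq hpp, integral_sub hqi hpi, hp1, hq1] at hmono
  linarith

theorem weighting_lt_one_increases_entropy
    {Ω : Type*} [MeasurableSpace Ω] (M : Measure Ω) (g : Ω → ℝ) (γ : ℝ)
    (hg_pos : ∀ ω, 0 < g ω)
    (hg_pdf : ∫ ω, g ω ∂M = 1)
    (hg_nonunif : ∃ ω₁ ω₂, g ω₁ ≠ g ω₂)
    (hγ0 : 0 < γ) (hγ1 : γ < 1)
    (hint_pos : 0 < ∫ ω, g ω ^ γ ∂M)
    (hint : Integrable (fun ω => g ω ^ γ) M)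
    (hΓ_pdf : ∫ ω, g ω ^ γ / (∫ ω', g ω' ^ γ ∂M) ∂M = 1)
    (hent₁ : Integrable (fun ω => g ω * Real.log (g ω)) M)
    (hent₂ : Integrable
      (fun ω => g ω * Real.log (g ω ^ γ / ∫ ω', g ω' ^ γ ∂M)) M)
    (hent₃ : Integrable
      (fun ω => (g ω ^ γ / ∫ ω', g ω' ^ γ ∂M) *
        Real.log (g ω ^ γ / ∫ ω', g ω' ^ γ ∂M)) M) :
    (-∫ ω, (g ω ^ γ / ∫ ω', g ω' ^ γ ∂M) *
        Real.log (g ω ^ γ / ∫ ω', g ω' ^ γ ∂M) ∂M) ≥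
      -∫ ω, g ω * Real.log (g ω) ∂M := by
  set Z : ℝ := ∫ ω', g ω' ^ γ ∂M with hZ
  have hZpos : 0 < Z := hint_pos
  set Γ : Ω → ℝ := fun ω => g ω ^ γ / Z with hΓ
  have hΓpos : ∀ ω, 0 < Γ ω := fun ω =>
    div_pos (Real.rpow_pos_of_pos (hg_pos ω) γ) hZpos
  have hΓint : Integrable Γ M := hint.div_const Z
  have hg_int : Integrable g M := by
    by_contra h
    rw [integral_undef h] at hg_pdf
    exact one_ne_zero hg_pdf.symm
  -- log Γ ω = γ * log g ω - log Z
  have hlogΓ : ∀ ω, Real.log (Γ ω) = γ * Real.log (g ω) - Real.log Z := by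
    intro ω
    rw [hΓ]
    rw [Real.log_div (Real.rpow_pos_of_pos (hg_pos ω) γ).ne' hZpos.ne',
      Real.log_rpow (hg_pos ω)]
  set A : ℝ := ∫ ω, g ω * Real.log (g ω) ∂M with hA
  set B : ℝ := ∫ ω, Γ ω * Real.log (Γ ω) ∂M with hB
  -- first Gibbs: ∫ g log Γ ≤ A
  have gibbs1 : ∫ ω, g ω * Real.log (Γ ω) ∂M ≤ A :=
    gibbs_aux M g Γ hg_pos hΓpos hg_int hΓint hg_pdf hΓ_pdf hent₁ hent₂
  -- compute ∫ g log Γ = γ A - log Z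
  have hcomp1 : ∫ ω, g ω * Real.log (Γ ω) ∂M = γ * A - Real.log Z := by
    have : ∀ ω, g ω * Real.log (Γ ω)
        = γ * (g ω * Real.log (g ω)) - Real.log Z * g ω := by
      intro ω; rw [hlogΓ ω]; ring
    rw [integral_congr_ae (Filter.Eventually.of_forall this),
      integral_sub (hent₁.const_mul γ) (hg_int.const_mul (Real.log Z)),
      integral_const_mul, integral_const_mul, hg_pdf]
    ring
  -- second Gibbs: ∫ Γ log g ≤ B
  have hΓlogg_int : Integrable (fun ω => Γ ω * Real.log (g ω)) M := by
    have heq : ∀ ω, Γ ω * Real.log (g ω)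
        = (1/γ) * (Γ ω * Real.log (Γ ω)) + (Real.log Z / γ) * Γ ω := by
      intro ω
      rw [hlogΓ ω]
      field_simp
      ring
    exact (Integrable.congr ((hent₃.const_mul (1/γ)).add
      (hΓint.const_mul (Real.log Z / γ)))
      (Filter.Eventually.of_forall fun ω => (heq ω).symm))
  have gibbs2 : ∫ ω, Γ ω * Real.log (g ω) ∂M ≤ B :=
    gibbs_aux M Γ g hΓpos hg_pos hΓint hg_int hΓ_pdf hg_pdf hent₃ hΓlogg_int
  -- compute ∫ Γ log g = (B + log Z)/γ
  have hcomp2 : γ * ∫ ω, Γ ω * Real.log (g ω) ∂M = B + Real.log Z := by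
    have : ∀ ω, γ * (Γ ω * Real.log (g ω))
        = Γ ω * Real.log (Γ ω) + Real.log Z * Γ ω := by
      intro ω
      rw [hlogΓ ω]
      ring
    calc γ * ∫ ω, Γ ω * Real.log (g ω) ∂M
        = ∫ ω, γ * (Γ ω * Real.log (g ω)) ∂M := (integral_const_mul γ _).symm
      _ = ∫ ω, (Γ ω * Real.log (Γ ω) + Real.log Z * Γ ω) ∂M :=
          integral_congr_ae (Filter.Eventually.of_forall this)
      _ = B + Real.log Z := by
          rw [integral_add hent₃ (hΓint.const_mul (Real.log Z)),
            integral_const_mul, hΓ_pdf, ← hB]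
          ring
  -- combine
  have h1 : γ * A - Real.log Z ≤ A := hcomp1 ▸ gibbs1
  have h2 : B + Real.log Z ≤ γ * B := by
    have := mul_le_mul_of_nonneg_left gibbs2 hγ0.le
    linarith [hcomp2]
  have : B ≤ A := by nlinarith
  linarith
end
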